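/- In the load-balancing two-sided facility location game, suppose facility p strictly improves its equilibrium load by relocating from profile s to s' = (s'_p, s_{−p}), with client equilibria σ and σ' respectively. Then every facility q whose load strictly decreases (ℓ_q(s', σ') < ℓ_q(s, σ)) satisfies ℓ_q(s', σ') ≥ ℓ_p(s', σ'). -/

import Mathlib

open Finset

/-- Load of facility `j` under weight distribution `σ`. -/
def load {n k : ℕ} (σ : Fin n → Fin k → ℝ) (j : Fin k) : ℝ := ∑ i, σ i j

/-- A feasible client weight distribution: nonnegative, supported on accessible
facilities, and clients with a nonempty accessible set distribute their full weight. -/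
def Feasible {n k : ℕ} (w : Fin n → ℝ) (N : Fin n → Finset (Fin k))
    (σ : Fin n → Fin k → ℝ) : Prop :=
  (∀ i j, 0 ≤ σ i j) ∧
  (∀ i j, j ∉ N i → σ i j = 0) ∧
  (∀ i, (N i).Nonempty → ∑ j ∈ N i, σ i j = w i)

/-- Client equilibrium: no client puts positive weight on a facility while a
strictly less loaded accessible facility exists. -/
def ClientEq {n k : ℕ} (w : Fin n → ℝ) (N : Fin n → Finset (Fin k))
    (σ : Fin n → Fin k → ℝ) : Prop :=
  Feasible w N σ ∧
  ∀ i : Fin n, ∀ j ∈ N i, ∀ j' ∈ N i, 0 < σ i j → load σ j ≤ load σ j'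

/-- Facilities accessible to client `i` under placement `s`. -/
def NsF {n k : ℕ} (E : Fin n → Fin n → Bool) (s : Fin k → Fin n) (i : Fin n) :
    Finset (Fin k) :=
  Finset.univ.filter (fun j => s j = i ∨ E i (s j) = true)

/-- If facility `p` strictly improves by relocating, then any facility whose
equilibrium load strictly decreases still has load at least `p`'s new load. -/
theorem no_load_below_improver (n k : ℕ)
    (w : Fin n → ℝ) (hw : ∀ i, 0 < w i) (E : Fin n → Fin n → Bool)
    (s : Fin k → Fin n) (p : Fin k) (v : Fin n)
    (σ σ' : Fin n → Fin k → ℝ)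
    (hσ : ClientEq w (NsF E s) σ)
    (hσ' : ClientEq w (NsF E (Function.update s p v)) σ')
    (himp : load σ p < load σ' p) :
    ∀ q : Fin k, load σ' q < load σ q → load σ' p ≤ load σ' q := by
  intro q₀ hq₀
  obtain ⟨⟨hnn, hsupp, hsum⟩, heq⟩ := hσ
  obtain ⟨⟨hnn', hsupp', hsum'⟩, heq'⟩ := hσ'
  -- membership in accessible sets is unchanged off p
  have hmem : ∀ (j : Fin k) (i : Fin n), j ≠ p →
      (j ∈ NsF E (Function.update s p v) i ↔ j ∈ NsF E s i) := by
    intro j i hj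
    simp [NsF, Function.update_of_ne hj]
  -- D : set of facilities whose load strictly decreased
  set D : Finset (Fin k) := Finset.univ.filter (fun j => load σ' j < load σ j) with hD
  have hq₀D : q₀ ∈ D := by simp [hD, hq₀]
  obtain ⟨qm, hqmD, hmin⟩ := D.exists_min_image (load σ') ⟨q₀, hq₀D⟩
  set m : ℝ := load σ' qm with hm
  set T : Finset (Fin k) := D.filter (fun j => load σ' j = m) with hT
  have hqmT : qm ∈ T := by simp [hT, hqmD, hm]
  -- total load on T strictly decreased
  have hTsum : ∑ j ∈ T, load σ' j < ∑ j ∈ T, load σ j := by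
    apply Finset.sum_lt_sum_of_nonempty ⟨qm, hqmT⟩
    intro j hj
    have : j ∈ D := Finset.mem_of_mem_filter j hj
    simpa [hD] using (Finset.mem_filter.mp this).2
  -- find a client whose weight on T decreased
  have hTi : ∃ i : Fin n, ∑ j ∈ T, σ' i j < ∑ j ∈ T, σ i j := by
    by_contra h
    push_neg at h
    have : ∑ j ∈ T, load σ j ≤ ∑ j ∈ T, load σ' j := by
      simp only [load]
      rw [Finset.sum_comm, Finset.sum_comm (s := T)]
      exact Finset.sum_le_sum fun i _ => h i
    linarith
  obtain ⟨i, hi⟩ := hTi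
  -- find q ∈ T with σ' i q < σ i q
  have hq : ∃ q ∈ T, σ' i q < σ i q := by
    by_contra h
    push_neg at h
    have : ∑ j ∈ T, σ i j ≤ ∑ j ∈ T, σ' i j :=
      Finset.sum_le_sum fun j hj => h j hj
    linarith
  obtain ⟨q, hqT, hqlt⟩ := hq
  have hqD : q ∈ D := Finset.mem_of_mem_filter q hqT
  have hqdec : load σ' q < load σ q := by
    simpa [hD] using (Finset.mem_filter.mp hqD).2
  have hqm' : load σ' q = m := (Finset.mem_filter.mp hqT).2
  have hqpos : 0 < σ i q := lt_of_le_of_lt (hnn' i q) hqlt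
  have hqN : q ∈ NsF E s i := by
    by_contra h
    exact absurd (hsupp i q h) (ne_of_gt hqpos)
  have hpq : q ≠ p := by
    intro h
    subst h
    linarith
  have hqN' : q ∈ NsF E (Function.update s p v) i := (hmem q i hpq).mpr hqN
  -- client i's total weights coincide
  have htot : ∑ j, σ i j = ∑ j, σ' i j := by
    have h1 : ∑ j, σ i j = w i := by
      rw [← Finset.sum_subset (Finset.subset_univ (NsF E s i))
        (fun x _ hx => hsupp i x hx)]
      exact hsum i ⟨q, hqN⟩
    have h2 : ∑ j, σ' i j = w i := by
      rw [← Finset.sum_subset (Finset.subset_univ (NsF E (Function.update s p v) i))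
        (fun x _ hx => hsupp' i x hx)]
      exact hsum' i ⟨q, hqN'⟩
    rw [h1, h2]
  -- hence weight outside T increased: find j' ∉ T with σ i j' < σ' i j'
  have hsplit : ∀ (τ : Fin n → Fin k → ℝ),
      ∑ j, τ i j = ∑ j ∈ T, τ i j + ∑ j ∈ Finset.univ \ T, τ i j := by
    intro τ
    rw [← Finset.sum_sdiff (Finset.subset_univ T)]
    ring
  have hout : ∃ j' ∈ Finset.univ \ T, σ i j' < σ' i j' := by
    by_contra h
    push_neg at h
    have : ∑ j ∈ Finset.univ \ T, σ' i j ≤ ∑ j ∈ Finset.univ \ T, σ i j :=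
      Finset.sum_le_sum fun j hj => h j hj
    have e1 := hsplit σ
    have e2 := hsplit σ'
    linarith
  obtain ⟨j', hj'nT, hj'lt⟩ := hout
  have hj'T : j' ∉ T := (Finset.mem_sdiff.mp hj'nT).2
  have hj'pos : 0 < σ' i j' := lt_of_le_of_lt (hnn i j') hj'lt
  have hj'N' : j' ∈ NsF E (Function.update s p v) i := by
    by_contra h
    exact absurd (hsupp' i j' h) (ne_of_gt hj'pos)
  -- σ'-equilibrium: load σ' j' ≤ load σ' q
  have hle' : load σ' j' ≤ load σ' q := heq' i j' hj'N' q hqN' hj'pos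
  by_cases hj'p : j' = p
  · -- p received positive weight from i, so load σ' p ≤ m ≤ load σ' q₀
    subst hj'p
    calc load σ' j' ≤ load σ' q := hle'
      _ = m := hqm'
      _ ≤ load σ' q₀ := hmin q₀ hq₀D
  · -- j' is another facility: it decreased and has load < m, contradiction
    exfalso
    have hj'N : j' ∈ NsF E s i := (hmem j' i hj'p).mp hj'N'
    have hle : load σ q ≤ load σ j' := heq i q hqN j' hj'N hqpos
    have hj'dec : load σ' j' < load σ j' :=
      lt_of_le_of_lt (hle'.trans (le_of_eq hqm')) (lt_of_lt_of_le (hqm' ▸ hqdec) hle)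
    have hj'D : j' ∈ D := by simp [hD, hj'dec]
    have : m ≤ load σ' j' := hmin j' hj'D
    have hj'm : load σ' j' = m := le_antisymm (hle'.trans (le_of_eq hqm')) this
    exact hj'T (by simp [hT, hj'D, hj'm])
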